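/- Let Ã be a commutative ring and I ⊆ Ã an ideal with I² = 0, and work in the Laurent series ring Ã((w)) with w = z⁻¹ as above. Suppose D and D′ both satisfy: coefficient of wⁿ in I for all n < 0 and coefficient of w⁰ in 1 + I. Let γ, γ′, γ″ ∈ 1 + I[z] be the unique elements (as in the preparation lemma) with γD ∈ 1 + z⁻¹Ã[[z⁻¹]], γ′D′ ∈ 1 + z⁻¹Ã[[z⁻¹]], and γ″(D·D′) ∈ 1 + z⁻¹Ã[[z⁻¹]]. Then the product D·D′ again satisfies the same hypotheses, and γ″ = γ·γ′. -/
import Mathlib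


/-- `D ∈ I[z] + 1 + z⁻¹A[[z⁻¹]]` inside the Laurent series ring `A((w))` with
`w = z⁻¹`: the coefficient of `wⁿ` lies in `I` for all `n < 0` and the
coefficient of `w⁰` lies in `1 + I`. -/
def IsPolyPlusOnePlusTail {A : Type*} [CommRing A] (I : Ideal A)
    (D : LaurentSeries A) : Prop :=
  (∀ n : ℤ, n < 0 → D.coeff n ∈ I) ∧ D.coeff 0 - 1 ∈ I

/-- `γ ∈ 1 + I[z]`: the coefficient of `wⁿ` vanishes for `n > 0`, lies in `I`
for `n < 0`, and the coefficient of `w⁰` lies in `1 + I`. -/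
def IsOnePlusIPoly {A : Type*} [CommRing A] (I : Ideal A)
    (γ : LaurentSeries A) : Prop :=
  (∀ n : ℤ, 0 < n → γ.coeff n = 0) ∧ (∀ n : ℤ, n < 0 → γ.coeff n ∈ I) ∧
    γ.coeff 0 - 1 ∈ I

/-- `x ∈ 1 + z⁻¹A[[z⁻¹]]`: the coefficient of `w⁰` is `1` and the coefficients
of `wⁿ` vanish for `n < 0`. -/
def IsOnePlusTail {A : Type*} [CommRing A] (x : LaurentSeries A) : Prop :=
  x.coeff 0 = 1 ∧ ∀ n : ℤ, n < 0 → x.coeff n = 0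


section Helpers

variable {A : Type*} [CommRing A] (I : Ideal A)

lemma mulCoeffMem {x y : LaurentSeries A}
    (hx : ∀ n : ℤ, n ≤ 0 → x.coeff n ∈ I)
    (hy : ∀ n : ℤ, n ≤ 0 → y.coeff n ∈ I) :
    ∀ n : ℤ, n ≤ 0 → (x * y).coeff n ∈ I := by
  intro n hn
  rw [HahnSeries.coeff_mul]
  refine Ideal.sum_mem _ fun ij hij => ?_
  rw [Finset.mem_addAntidiagonal] at hij
  rcases le_or_gt ij.1 0 with h | h
  · exact Ideal.mul_mem_right _ _ (hx _ h)
  · have h2 : ij.2 ≤ 0 := by omega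
    exact Ideal.mul_mem_left _ _ (hy _ h2)

lemma mulCoeffZeroLe {x y : LaurentSeries A}
    (hx : ∀ n : ℤ, n ≤ 0 → x.coeff n = 0)
    (hy : ∀ n : ℤ, n ≤ 0 → y.coeff n = 0) :
    ∀ n : ℤ, n ≤ 0 → (x * y).coeff n = 0 := by
  intro n hn
  rw [HahnSeries.coeff_mul]
  refine Finset.sum_eq_zero fun ij hij => ?_
  rw [Finset.mem_addAntidiagonal] at hij
  rcases le_or_gt ij.1 0 with h | h
  · rw [hx _ h, zero_mul]
  · have h2 : ij.2 ≤ 0 := by omega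
    rw [hy _ h2, mul_zero]

lemma mulCoeffZeroPos {x y : LaurentSeries A}
    (hx : ∀ n : ℤ, 0 < n → x.coeff n = 0)
    (hy : ∀ n : ℤ, 0 < n → y.coeff n = 0) :
    ∀ n : ℤ, 0 < n → (x * y).coeff n = 0 := by
  intro n hn
  rw [HahnSeries.coeff_mul]
  refine Finset.sum_eq_zero fun ij hij => ?_
  rw [Finset.mem_addAntidiagonal] at hij
  rcases lt_or_ge 0 ij.1 with h | h
  · rw [hx _ h, zero_mul]
  · have h2 : 0 < ij.2 := by omega
    rw [hy _ h2, mul_zero]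

end Helpers

/-- multiplicativity of the preparation lemma: if `I² = 0`,
`D, D' ∈ I[z] + 1 + z⁻¹A[[z⁻¹]]`, and `γ, γ', γ'' ∈ 1 + I[z]` are the unique
elements with `γD`, `γ'D'`, `γ''(D·D')` in `1 + z⁻¹A[[z⁻¹]]`, then `D·D'`
again lies in `I[z] + 1 + z⁻¹A[[z⁻¹]]` and `γ'' = γ·γ'`. -/
theorem weierstrass_preparation_multiplicative {A : Type*} [CommRing A]
    (I : Ideal A) (hI : I ^ 2 = ⊥) (D D' : LaurentSeries A)
    (hD : IsPolyPlusOnePlusTail I D) (hD' : IsPolyPlusOnePlusTail I D')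
    (γ γ' γ'' : LaurentSeries A)
    (hγ : IsOnePlusIPoly I γ) (hγD : IsOnePlusTail (γ * D))
    (hγ' : IsOnePlusIPoly I γ') (hγ'D' : IsOnePlusTail (γ' * D'))
    (hγ'' : IsOnePlusIPoly I γ'') (hγ''DD' : IsOnePlusTail (γ'' * (D * D'))) :
    IsPolyPlusOnePlusTail I (D * D') ∧ γ'' = γ * γ' := by
  -- basic consequence of I² = 0
  have hmul0 : ∀ a b : A, a ∈ I → b ∈ I → a * b = 0 := by
    intro a b ha hb
    have h := Ideal.mul_mem_mul ha hb
    rw [← sq, hI, Ideal.mem_bot] at h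
    exact h
  -- reformulations via `x - 1`
  have key : ∀ x : LaurentSeries A, (∀ n : ℤ, n < 0 → x.coeff n ∈ I) →
      x.coeff 0 - 1 ∈ I → ∀ n : ℤ, n ≤ 0 → (x - 1).coeff n ∈ I := by
    intro x h1 h2 n hn
    rw [HahnSeries.coeff_sub, HahnSeries.coeff_one]
    rcases lt_or_eq_of_le hn with h | h
    · rw [if_neg h.ne]
      simpa using h1 n h
    · subst h
      rw [if_pos rfl]
      exact h2
  have keyT : ∀ x : LaurentSeries A, IsOnePlusTail x →
      ∀ n : ℤ, n ≤ 0 → (x - 1).coeff n = 0 := by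
    intro x hx n hn
    rw [HahnSeries.coeff_sub, HahnSeries.coeff_one]
    rcases lt_or_eq_of_le hn with h | h
    · rw [if_neg h.ne, hx.2 n h, sub_zero]
    · subst h
      rw [if_pos rfl, hx.1, sub_self]
  have keyP : ∀ x : LaurentSeries A, (∀ n : ℤ, 0 < n → x.coeff n = 0) →
      ∀ n : ℤ, 0 < n → (x - 1).coeff n = 0 := by
    intro x hx n hn
    rw [HahnSeries.coeff_sub, HahnSeries.coeff_one, if_neg hn.ne', hx n hn,
      sub_zero]
  have hE : ∀ n : ℤ, n ≤ 0 → (D - 1).coeff n ∈ I := key D hD.1 hD.2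
  have hE' : ∀ n : ℤ, n ≤ 0 → (D' - 1).coeff n ∈ I := key D' hD'.1 hD'.2
  -- Part 1 : D * D' ∈ I[z] + 1 + tail
  have hDD' : ∀ n : ℤ, n ≤ 0 → (D * D' - 1).coeff n ∈ I := by
    intro n hn
    have hid : D * D' - 1 = (D - 1) + (D' - 1) + (D - 1) * (D' - 1) := by ring
    rw [hid, HahnSeries.coeff_add, HahnSeries.coeff_add]
    exact Ideal.add_mem _ (Ideal.add_mem _ (hE n hn) (hE' n hn))
      (mulCoeffMem I hE hE' n hn)
  have part1 : IsPolyPlusOnePlusTail I (D * D') := by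
    constructor
    · intro n hn
      have := hDD' n hn.le
      rwa [HahnSeries.coeff_sub, HahnSeries.coeff_one, if_neg hn.ne,
        sub_zero] at this
    · have := hDD' 0 le_rfl
      rwa [HahnSeries.coeff_sub, HahnSeries.coeff_one, if_pos rfl] at this
  -- γ * γ' has the right shape
  have hg : ∀ n : ℤ, n ≤ 0 → (γ - 1).coeff n ∈ I := key γ hγ.2.1 hγ.2.2
  have hg' : ∀ n : ℤ, n ≤ 0 → (γ' - 1).coeff n ∈ I := key γ' hγ'.2.1 hγ'.2.2
  have hgp : ∀ n : ℤ, 0 < n → (γ - 1).coeff n = 0 := keyP γ hγ.1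
  have hg'p : ∀ n : ℤ, 0 < n → (γ' - 1).coeff n = 0 := keyP γ' hγ'.1
  have hγγ'I : ∀ n : ℤ, n ≤ 0 → (γ * γ' - 1).coeff n ∈ I := by
    intro n hn
    have hid : γ * γ' - 1 = (γ - 1) + (γ' - 1) + (γ - 1) * (γ' - 1) := by ring
    rw [hid, HahnSeries.coeff_add, HahnSeries.coeff_add]
    exact Ideal.add_mem _ (Ideal.add_mem _ (hg n hn) (hg' n hn))
      (mulCoeffMem I hg hg' n hn)
  have hγγ'P : ∀ n : ℤ, 0 < n → (γ * γ').coeff n = 0 := by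
    intro n hn
    have hid : γ * γ' = 1 + ((γ - 1) + (γ' - 1) + (γ - 1) * (γ' - 1)) := by
      ring
    rw [hid, HahnSeries.coeff_add, HahnSeries.coeff_add, HahnSeries.coeff_add,
      HahnSeries.coeff_one, if_neg hn.ne', hgp n hn, hg'p n hn,
      mulCoeffZeroPos hgp hg'p n hn]
    ring
  -- (γD)(γ'D') is 1 + tail
  have hu : ∀ n : ℤ, n ≤ 0 → (γ * D - 1).coeff n = 0 := keyT _ hγD
  have hu' : ∀ n : ℤ, n ≤ 0 → (γ' * D' - 1).coeff n = 0 := keyT _ hγ'D'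
  have hprod : ∀ n : ℤ, n ≤ 0 → (γ * γ' * (D * D') - 1).coeff n = 0 := by
    intro n hn
    have hid : γ * γ' * (D * D') - 1 =
        (γ * D - 1) + (γ' * D' - 1) + (γ * D - 1) * (γ' * D' - 1) := by ring
    rw [hid, HahnSeries.coeff_add, HahnSeries.coeff_add, hu n hn, hu' n hn,
      mulCoeffZeroLe hu hu' n hn]
    ring
  -- the difference δ
  set δ : LaurentSeries A := γ'' - γ * γ' with hδdef
  have hδI : ∀ n : ℤ, δ.coeff n ∈ I := by
    intro n
    rcases le_or_gt n 0 with hn | hn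
    · have hid : δ = (γ'' - 1) - (γ * γ' - 1) := by rw [hδdef]; ring
      rw [hid, HahnSeries.coeff_sub]
      exact Ideal.sub_mem _ (key γ'' hγ''.2.1 hγ''.2.2 n hn) (hγγ'I n hn)
    · rw [hδdef, HahnSeries.coeff_sub, hγ''.1 n hn, hγγ'P n hn, sub_zero]
      exact I.zero_mem
  have hδpos : ∀ n : ℤ, 0 < n → δ.coeff n = 0 := by
    intro n hn
    rw [hδdef, HahnSeries.coeff_sub, hγ''.1 n hn, hγγ'P n hn, sub_zero]
  have hδF : ∀ n : ℤ, n ≤ 0 → (δ * (D * D')).coeff n = 0 := by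
    intro n hn
    have hid : δ * (D * D') =
        (γ'' * (D * D') - 1) - (γ * γ' * (D * D') - 1) := by
      rw [hδdef]; ring
    rw [hid, HahnSeries.coeff_sub, keyT _ hγ''DD' n hn, hprod n hn, sub_zero]
  -- δ = 0
  have hδ0 : δ = 0 := by
    by_contra hne
    have hsupp : δ.support.Nonempty := HahnSeries.support_nonempty_iff.2 hne
    set m := δ.isWF_support.min hsupp with hm
    have hmem : m ∈ δ.support := Set.IsWF.min_mem _ _
    have hm0 : m ≤ 0 := by
      by_contra h
      push_neg at h
      exact hmem (hδpos m h)
    have hδP : (δ * (D * D' - 1)).coeff m = 0 := by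
      rw [HahnSeries.coeff_mul]
      refine Finset.sum_eq_zero fun ij hij => ?_
      rw [Finset.mem_addAntidiagonal] at hij
      rcases le_or_gt ij.2 0 with h | h
      · exact hmul0 _ _ (hδI ij.1) (hDD' ij.2 h)
      · have hlt : ij.1 < m := by omega
        exact absurd hij.1 (fun hcon =>
          Set.IsWF.not_lt_min δ.isWF_support hsupp hcon hlt)
    have hid : δ * (D * D') = δ + δ * (D * D' - 1) := by ring
    have : δ.coeff m = 0 := by
      have h1 := hδF m hm0
      rw [hid, HahnSeries.coeff_add, hδP, add_zero] at h1
      exact h1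
    exact hmem this
  exact ⟨part1, sub_eq_zero.mp hδ0⟩
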